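/- Let w be a word over {a,b} and x a letter such that wx is a closed trapezoidal word while w is open. Then H_w ≤ L_w. -/

import Mathlib

/-- The two-letter alphabet {a, b}. -/
inductive AB : Type
  | a : AB
  | b : AB
deriving DecidableEq, Repr

/-- A (finite) word over {a, b}. -/
abbrev Word := List AB

open AB

/-- `u` occurs in `w` at position `i`. -/
def OccursAt (u w : Word) (i : ℕ) : Prop :=
  i + u.length ≤ w.length ∧ (w.drop i).take u.length = u

/-- `u` occurs exactly once in `w` (is unrepeated in `w`). -/
def OccursOnce (u w : Word) : Prop := ∃! i, OccursAt u w i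

/-- `u` is a right special factor of `w`: both `ua` and `ub` are factors of `w`. -/
def IsRightSpecial (u w : Word) : Prop := (u ++ [a]) <:+: w ∧ (u ++ [b]) <:+: w

/-- `u` is a left special factor of `w`: both `au` and `bu` are factors of `w`. -/
def IsLeftSpecial (u w : Word) : Prop := ([a] ++ u) <:+: w ∧ ([b] ++ u) <:+: w

/-- `K w`: the length of the shortest unrepeated suffix of `w`. -/
noncomputable def Kp (w : Word) : ℕ := sInf {n | ∃ s : Word, s <:+ w ∧ s.length = n ∧ OccursOnce s w}

/-- `H w`: the length of the shortest unrepeated prefix of `w`. -/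
noncomputable def Hp (w : Word) : ℕ := sInf {n | ∃ p : Word, p <+: w ∧ p.length = n ∧ OccursOnce p w}

/-- `R w`: the smallest `n ≥ 0` such that `w` has no right special factor of length `n`. -/
noncomputable def Rp (w : Word) : ℕ := sInf {n | ∀ u : Word, u.length = n → ¬ IsRightSpecial u w}

/-- `L w`: the smallest `n ≥ 0` such that `w` has no left special factor of length `n`. -/
noncomputable def Lp (w : Word) : ℕ := sInf {n | ∀ u : Word, u.length = n → ¬ IsLeftSpecial u w}

/-- A word `w` is trapezoidal if `|w| = K w + R w`. -/
def IsTrapezoidal (w : Word) : Prop := w.length = Kp w + Rp w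

/-- A finite word over `{a,b}` is Sturmian iff it is balanced: there is no word `u`
with both `aua` and `bub` factors of `w`. -/
def IsSturmian (w : Word) : Prop :=
  ¬ ∃ u : Word, ([a] ++ u ++ [a]) <:+: w ∧ ([b] ++ u ++ [b]) <:+: w

/-- A nonempty word is closed if it has a border (a proper prefix which is also a suffix)
whose only occurrences in `w` are as a prefix and as a suffix. -/
def IsClosedWord (w : Word) : Prop :=
  w ≠ [] ∧ ∃ v : Word, v <+: w ∧ v.length < w.length ∧ v <:+ w ∧
    ∀ i : ℕ, OccursAt v w i → i = 0 ∨ i + v.length = w.length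

/-- A nonempty word is open if it is not closed. -/
def IsOpenWord (w : Word) : Prop := w ≠ [] ∧ ¬ IsClosedWord w

/-- Central words: `a^n`, `b^n`, or `u a b v = v b a u`. -/
def IsCentral (w : Word) : Prop :=
  (∃ n : ℕ, w = List.replicate n a) ∨ (∃ n : ℕ, w = List.replicate n b) ∨
  (∃ u v : Word, w = u ++ [a, b] ++ v ∧ w = v ++ [b, a] ++ u)

/-- The minimal period of `w`: `|w|` minus the length of the longest border of `w`. -/
noncomputable def minPeriod (w : Word) : ℕ :=
  w.length - sSup {n | ∃ v : Word, v.length = n ∧ v <+: w ∧ v ≠ w ∧ v <:+ w}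

namespace Stmt10Aux

/-! ### Basic lemmas about occurrences -/

lemma occursAt_iff {u w : Word} {i : ℕ} :
    OccursAt u w i ↔ i + u.length ≤ w.length ∧ ∀ j < u.length, w[i+j]? = u[j]? := by
  constructor
  · rintro ⟨h1, h2⟩
    refine ⟨h1, fun j hj => ?_⟩
    conv_rhs => rw [← h2]
    rw [List.getElem?_take, if_pos hj, List.getElem?_drop]
  · rintro ⟨h1, h2⟩
    refine ⟨h1, List.ext_getElem? fun j => ?_⟩
    by_cases hj : j < u.length
    · rw [List.getElem?_take, if_pos hj, List.getElem?_drop, h2 j hj]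
    · rw [List.getElem?_take, if_neg hj, List.getElem?_eq_none (le_of_not_gt hj)]

lemma occursAt_append {u w : Word} {x : AB} {i : ℕ} (h : OccursAt u w i) :
    OccursAt u (w ++ [x]) i := by
  rw [occursAt_iff] at h ⊢
  simp only [List.length_append, List.length_singleton]
  refine ⟨by omega, fun j hj => ?_⟩
  rw [List.getElem?_append_left (by omega : i + j < w.length), h.2 j hj]

lemma occursAt_of_append {u w : Word} {x : AB} {i : ℕ}
    (h : OccursAt u (w ++ [x]) i) (hle : i + u.length ≤ w.length) : OccursAt u w i := by
  rw [occursAt_iff] at h ⊢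
  refine ⟨hle, fun j hj => ?_⟩
  rw [← h.2 j hj, List.getElem?_append_left (by omega : i + j < w.length)]

lemma infix_iff_occursAt {u w : Word} : u <:+: w ↔ ∃ i, OccursAt u w i := by
  constructor
  · rintro ⟨s, t, rfl⟩
    refine ⟨s.length, ⟨by simp, ?_⟩⟩
    rw [List.append_assoc, List.drop_left, List.take_left]
  · rintro ⟨i, h1, h2⟩
    refine ⟨w.take i, w.drop (i + u.length), ?_⟩
    have h3 := List.take_append_drop u.length (w.drop i)
    rw [h2, List.drop_drop] at h3
    rw [List.append_assoc, h3, List.take_append_drop]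

lemma prefix_getElem? {u w : Word} (h : u <+: w) {j : ℕ} (hj : j < u.length) :
    u[j]? = w[j]? := by
  obtain ⟨t, rfl⟩ := h
  rw [List.getElem?_append_left hj]

lemma ext_len_getElem? {l₁ l₂ : List AB} (hlen : l₁.length = l₂.length)
    (h : ∀ j < l₁.length, l₁[j]? = l₂[j]?) : l₁ = l₂ := by
  refine List.ext_getElem? fun n => ?_
  by_cases hn : n < l₁.length
  · exact h n hn
  · rw [List.getElem?_eq_none (le_of_not_gt hn), List.getElem?_eq_none (by omega)]

/-! ### Factor sets and counting -/

noncomputable def F (w : Word) (n : ℕ) : Finset Word :=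
  (Finset.range (w.length + 1 - n)).image (fun i => (w.drop i).take n)

lemma mem_F {w : Word} {n : ℕ} {u : Word} : u ∈ F w n ↔ u.length = n ∧ u <:+: w := by
  simp only [F, Finset.mem_image, Finset.mem_range]
  constructor
  · rintro ⟨i, hi, rfl⟩
    refine ⟨by simp; omega, ?_⟩
    exact ((List.take_prefix _ _).isInfix).trans (List.drop_suffix i w).isInfix
  · rintro ⟨hlen, hinf⟩
    obtain ⟨i, hi⟩ := infix_iff_occursAt.mp hinf
    obtain ⟨hi1, hi2⟩ := hi
    rw [hlen] at hi1 hi2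
    exact ⟨i, by omega, hi2⟩

lemma F_subset_of_infix {w w' : Word} (h : w <:+: w') (n : ℕ) : F w n ⊆ F w' n := by
  intro u hu
  rw [mem_F] at hu ⊢
  exact ⟨hu.1, hu.2.trans h⟩

lemma card_le_noLS {w : Word} {n : ℕ}
    (h : ∀ u : Word, u.length = n → ¬ IsLeftSpecial u w) :
    (F w (n+1)).card ≤ (F w n).card := by
  apply Finset.card_le_card_of_injOn (fun u => u.tail)
  · intro u hu
    rw [Finset.mem_coe, mem_F] at hu ⊢
    refine ⟨by simp [hu.1], (List.tail_suffix u).isInfix.trans hu.2⟩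
  · intro u hu v hv htail
    simp only [Finset.mem_coe] at hu hv
    rw [mem_F] at hu hv
    obtain ⟨c, u', rfl⟩ : ∃ c u', u = c :: u' := by
      cases u with
      | nil => simp at hu
      | cons c u' => exact ⟨c, u', rfl⟩
    obtain ⟨d, v', rfl⟩ : ∃ d v', v = d :: v' := by
      cases v with
      | nil => simp at hv
      | cons d v' => exact ⟨d, v', rfl⟩
    simp only [List.tail_cons] at htail
    subst htail
    by_cases hcd : c = d
    · rw [hcd]
    exfalso
    apply h u' (by simpa using hu.1)
    have h1 : (c :: u') <:+: w := hu.2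
    have h2 : (d :: u') <:+: w := hv.2
    cases c <;> cases d
    · exact (hcd rfl).elim
    · exact ⟨h1, h2⟩
    · exact ⟨h2, h1⟩
    · exact (hcd rfl).elim

lemma card_lt_RS {w : Word} {n : ℕ} {u₀ : Word} (h₀len : u₀.length = n)
    (h₀ : IsRightSpecial u₀ w)
    (hext : ∀ u ∈ F w n, ∃ c, u ++ [c] ∈ F w (n+1)) :
    (F w n).card + 1 ≤ (F w (n+1)).card := by
  have hTa : u₀ ++ [a] ∈ F w (n+1) := mem_F.mpr ⟨by simp [h₀len], h₀.1⟩
  have hTb : u₀ ++ [b] ∈ F w (n+1) := mem_F.mpr ⟨by simp [h₀len], h₀.2⟩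
  have hsurj : Set.SurjOn (fun t : Word => t.dropLast)
      ↑((F w (n+1)).erase (u₀ ++ [b])) ↑(F w n) := by
    intro u hu
    simp only [Finset.mem_coe] at hu
    by_cases huu : u = u₀
    · subst huu
      refine ⟨u ++ [a], ?_, by simp⟩
      simp only [Finset.coe_erase, Set.mem_diff, Finset.mem_coe, Set.mem_singleton_iff]
      exact ⟨hTa, by simp⟩
    · obtain ⟨c, hc⟩ := hext u hu
      refine ⟨u ++ [c], ?_, by simp⟩
      simp only [Finset.coe_erase, Set.mem_diff, Finset.mem_coe, Set.mem_singleton_iff]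
      refine ⟨hc, fun heq => ?_⟩
      have hlen : u.length = u₀.length := by rw [(mem_F.mp hu).1, h₀len]
      exact huu (List.append_inj_left heq hlen)
  have h1 := Finset.card_le_card_of_surjOn _ hsurj
  have h2 := Finset.card_erase_of_mem hTb
  have h3 : 0 < (F w (n+1)).card := Finset.card_pos.mpr ⟨_, hTb⟩
  omega

/-! ### Periodicity lemmas -/

section Periodic

variable {W v : Word} {p : ℕ}

lemma per_of_border (hvp : v <+: W) (hvs : v <:+ W) (hp : p = W.length - v.length)
    (_hplen : v.length < W.length) : ∀ j < v.length, W[p + j]? = W[j]? := by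
  intro j hj
  have hdrop : v = W.drop p := by
    rw [List.suffix_iff_eq_drop] at hvs; rw [hvs, hp]
  have h1 : W[p + j]? = v[j]? := by rw [hdrop, List.getElem?_drop]
  rw [h1, prefix_getElem? hvp hj]

variable (hNpb : W.length = p + v.length) (hp1 : 1 ≤ p)
  (hper : ∀ j < v.length, W[p + j]? = W[j]?)
  (hvpre : ∀ j < v.length, v[j]? = W[j]?)

include hNpb hp1 hper in
lemma P1 : ∀ k < W.length, W[k]? = W[k % p]? := by
  intro k
  induction k using Nat.strong_induction_on with
  | _ k ih =>
    intro hk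
    by_cases hkp : k < p
    · rw [Nat.mod_eq_of_lt hkp]
    · have h1 : k - p < v.length := by omega
      have h2 := hper (k - p) h1
      rw [show p + (k - p) = k by omega] at h2
      rw [h2, ih (k - p) (by omega) (by omega)]
      conv_rhs => rw [Nat.mod_eq_sub_mod (show p ≤ k by omega)]

variable (hocc : ∀ i : ℕ, OccursAt v W i → i = 0 ∨ i + v.length = W.length)

include hNpb hp1 hper hvpre hocc in
lemma P2 {r : ℕ} (hr0 : 0 < r) (hrp : r < p)
    (hrot : ∀ j < p, W[(r + j) % p]? = W[j]?) : False := by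
  have hoccr : OccursAt v W r := by
    rw [occursAt_iff]
    refine ⟨by omega, fun j hj => ?_⟩
    rw [hvpre j hj, P1 hNpb hp1 hper (r + j) (by omega), P1 hNpb hp1 hper j (by omega)]
    rw [show (r + j) % p = (r + j % p) % p by simp [Nat.add_mod]]
    exact hrot (j % p) (Nat.mod_lt _ (by omega))
  rcases hocc r hoccr with h | h
  · omega
  · omega

include hNpb hp1 hper hvpre hocc in
lemma P3 {i : ℕ} (hi : i + p ≤ W.length) (hz : ∀ j < p, W[i + j]? = W[j]?) :
    i % p = 0 := by
  by_contra hne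
  refine P2 hNpb hp1 hper hvpre hocc (r := i % p) (Nat.pos_of_ne_zero hne)
    (Nat.mod_lt _ (by omega)) (fun j hj => ?_)
  have h1 := hz j hj
  rw [P1 hNpb hp1 hper (i + j) (by omega)] at h1
  rw [show (i % p + j) % p = (i + j) % p by simp [Nat.add_mod]]
  exact h1

end Periodic

/-! ### The short case: `|wx| ≤ 2|v|` forces `w` closed -/

lemma closed_case (w : Word) (x : AB) (v : Word) (hw : w ≠ [])
    (hvp : v <+: w ++ [x]) (hvlt : v.length < (w ++ [x]).length) (hvs : v <:+ w ++ [x])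
    (hocc : ∀ i, OccursAt v (w ++ [x]) i → i = 0 ∨ i + v.length = (w ++ [x]).length)
    (hb1 : 1 ≤ v.length) (hcase : (w ++ [x]).length ≤ 2 * v.length) : IsClosedWord w := by
  set W := w ++ [x] with hW
  set b := v.length with hb
  set p := W.length - b with hp
  have hNw : W.length = w.length + 1 := by simp [hW]
  have hNpb : W.length = p + b := by omega
  have hp1 : 1 ≤ p := by omega
  have hpb : p ≤ b := by omega
  have hvpre : ∀ j < b, v[j]? = W[j]? := fun j hj => prefix_getElem? hvp hj
  have hper : ∀ j < b, W[p + j]? = W[j]? := per_of_border hvp hvs rfl hvlt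
  have hwW : ∀ k < w.length, w[k]? = W[k]? := fun k hk =>
    (List.getElem?_append_left hk).symm
  set u := w.take (b-1) with hu
  have hub : b - 1 ≤ w.length := by omega
  have hulen : u.length = b - 1 := by rw [hu, List.length_take]; omega
  have hupre : ∀ j < b - 1, u[j]? = W[j]? := fun j hj => by
    rw [hu, List.getElem?_take, if_pos hj]
    exact hwW j (by omega)
  have hudrop : u = w.drop p := by
    apply ext_len_getElem?
    · rw [hulen, List.length_drop]; omega
    · intro j hj
      rw [hulen] at hj
      rw [hupre j hj, List.getElem?_drop, hwW (p + j) (by omega), hper j (by omega)]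
  refine ⟨hw, u, List.take_prefix _ _, by rw [hulen]; omega, ?_, ?_⟩
  · rw [List.suffix_iff_eq_drop, hulen, show w.length - (b-1) = p by omega]
    exact hudrop
  · intro i hi
    by_contra hcon
    push_neg at hcon
    obtain ⟨hc0, hcend⟩ := hcon
    rw [hulen] at hcend
    rw [occursAt_iff, hulen] at hi
    obtain ⟨hi1, hi2⟩ := hi
    have hi0 : 1 ≤ i := by omega
    have hiend : i + (b-1) ≤ w.length - 1 := by omega
    have hpt : ∀ j < b - 1, W[i+j]? = W[j]? := by
      intro j hj
      rw [← hwW (i+j) (by omega), hi2 j hj, hupre j hj]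
    by_cases hbp : p ≤ b - 1
    · have hmod : i % p = 0 :=
        P3 hNpb hp1 hper hvpre hocc (by omega) (fun j hj => hpt j (by omega))
      obtain ⟨k, hk⟩ := Nat.dvd_of_mod_eq_zero hmod
      have hk1 : k ≠ 0 := by rintro rfl; simp at hk; omega
      have hk2 : k ≠ 1 := by rintro rfl; simp at hk; omega
      have hk3 : 2 ≤ k := by omega
      have h2p : 2 * p ≤ i := by
        calc 2 * p = p * 2 := by ring
        _ ≤ p * k := Nat.mul_le_mul_left p hk3
        _ = i := hk.symm
      omega
    · have hbp' : b = p := by omega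
      set z := W.take p with hz
      have hzlen : z.length = p := by rw [hz, List.length_take]; omega
      have hzj : ∀ j < p, z[j]? = W[j]? := fun j hj => by
        rw [hz, List.getElem?_take, if_pos hj]
      have hilt : i ≤ p - 1 := by omega
      have hrotj : ∀ j < p - 1, (z.rotate i)[j]? = z[j]? := by
        intro j hj
        rw [List.getElem?_rotate (by omega : j < z.length), hzlen]
        rw [hzj _ (Nat.mod_lt _ (by omega)), hzj _ (by omega)]
        have h1 := hpt j (by omega)
        rw [P1 hNpb hp1 hper (i+j) (by omega)] at h1
        rw [show (j+i) % p = (i+j) % p by rw [Nat.add_comm]]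
        exact h1
      have hperm := List.rotate_perm z i
      have hlenr : (z.rotate i).length = p := by rw [List.length_rotate, hzlen]
      have hrot_eq : z.rotate i = z := by
        apply ext_len_getElem? (by rw [hlenr, hzlen])
        intro j hj
        rw [hlenr] at hj
        by_cases hjp : j < p - 1
        · exact hrotj j hjp
        · have hjeq : j = p - 1 := by omega
          subst hjeq
          obtain ⟨c, hc⟩ : ∃ c, (z.rotate i)[p-1]? = some c :=
            ⟨(z.rotate i)[p-1]'(by omega), List.getElem?_eq_getElem (by omega)⟩
          obtain ⟨d, hd⟩ : ∃ d, z[p-1]? = some d :=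
            ⟨z[p-1]'(by omega), List.getElem?_eq_getElem (by omega)⟩
          rw [hc, hd]
          suffices hcd : c = d by rw [hcd]
          have hzdec : z = z.take (p-1) ++ [d] := by
            conv_lhs => rw [← List.take_of_length_le (le_of_eq hzlen)]
            rw [show p = (p-1) + 1 by omega, List.take_succ]
            rw [show z[p-1]? = some d from hd]
            rfl
          have hrdec : z.rotate i = (z.rotate i).take (p-1) ++ [c] := by
            conv_lhs => rw [← List.take_of_length_le (le_of_eq hlenr)]
            rw [show p = (p-1) + 1 by omega, List.take_succ]
            rw [show (z.rotate i)[p-1]? = some c from hc]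
            rfl
          have htake : (z.rotate i).take (p-1) = z.take (p-1) := by
            apply ext_len_getElem? (by rw [List.length_take, List.length_take, hlenr, hzlen])
            intro j hj
            rw [List.length_take, hlenr] at hj
            have hj' : j < p - 1 := by omega
            rw [List.getElem?_take, if_pos hj', List.getElem?_take, if_pos hj']
            exact hrotj j hj'
          have e1 : ((z.rotate i).take (p-1) ++ [c]).count d
              = (z.take (p-1) ++ [d]).count d := by
            rw [← hrdec]
            conv_rhs => rw [← hzdec]
            exact hperm.count_eq d
          rw [htake, List.count_append, List.count_append] at e1
          by_contra hcd
          simp [List.count_singleton, hcd, beq_iff_eq] at e1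
      have hrot_all : ∀ j < p, W[(i + j) % p]? = W[j]? := by
        intro j hj
        have hr : (z.rotate i)[j]? = z[j]? := by rw [hrot_eq]
        rw [List.getElem?_rotate (by omega : j < z.length), hzlen,
          hzj _ (Nat.mod_lt _ (by omega)), hzj _ hj] at hr
        rw [show (i+j) % p = (j+i) % p by rw [Nat.add_comm]]
        exact hr
      exact P2 hNpb hp1 hper hvpre hocc hi0 (by omega : i < p) hrot_all

/-! ### `Kp` of a closed word -/

lemma Kp_closed (W : Word) (v : Word)
    (hvp : v <+: W) (hvlt : v.length < W.length) (hvs : v <:+ W)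
    (hocc : ∀ i, OccursAt v W i → i = 0 ∨ i + v.length = W.length)
    (hb1 : 1 ≤ v.length) : Kp W = v.length + 1 := by
  set b := v.length with hb
  set p := W.length - b with hp
  set N := W.length with hN
  have hNpb : N = p + b := by omega
  have hp1 : 1 ≤ p := by omega
  have hvpre : ∀ j < b, v[j]? = W[j]? := fun j hj => prefix_getElem? hvp hj
  have hvdrop : v = W.drop p := by
    rw [List.suffix_iff_eq_drop] at hvs; exact hvs
  have hvj : ∀ j < b, W[p + j]? = v[j]? := fun j hj => by
    rw [hvdrop, List.getElem?_drop]
  have hper : ∀ j < b, W[p + j]? = W[j]? := fun j hj => by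
    rw [hvj j hj, hvpre j hj]
  set A := {n | ∃ s : Word, s <:+ W ∧ s.length = n ∧ OccursOnce s W} with hA
  set s := W.drop (p-1) with hs
  have hslen : s.length = b + 1 := by rw [hs, List.length_drop]; omega
  have hsj : ∀ j < b + 1, s[j]? = W[(p-1) + j]? := fun j hj => by
    rw [hs, List.getElem?_drop]
  have hmem : (b+1) ∈ A := by
    refine ⟨s, List.drop_suffix _ _, hslen, ⟨p - 1, ?_, ?_⟩⟩
    · show OccursAt s W (p-1)
      rw [occursAt_iff, hslen]
      refine ⟨by omega, fun j hj => (hsj j hj).symm⟩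
    · intro i hi
      have hi : OccursAt s W i := hi
      rw [occursAt_iff, hslen] at hi
      obtain ⟨hi1, hi2⟩ := hi
      have hvocc : OccursAt v W (i+1) := by
        rw [occursAt_iff]
        refine ⟨by omega, fun j hj => ?_⟩
        have h1 := hi2 (1 + j) (by omega)
        rw [hsj (1+j) (by omega)] at h1
        rw [show i + (1+j) = (i+1) + j by omega] at h1
        rw [show (p-1) + (1+j) = p + j by omega] at h1
        rw [h1, ← hvj j hj]
      rcases hocc (i+1) hvocc with h | h
      · omega
      · omega
  have hsmall : ∀ n ∈ A, ¬ (n ≤ b) := by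
    rintro n ⟨s', hs's, hs'len, i₀, hocc₀, huniq⟩ hn
    have hs'drop : s' = W.drop (N - n) := by
      rw [List.suffix_iff_eq_drop] at hs's; rw [hs's, hs'len]
    have hs'j : ∀ j < n, s'[j]? = W[(N-n) + j]? := fun j hj => by
      rw [hs'drop, List.getElem?_drop]
    have h1 : OccursAt s' W (N - n) := by
      rw [occursAt_iff, hs'len]
      exact ⟨by omega, fun j hj => (hs'j j hj).symm⟩
    have h2 : OccursAt s' W (b - n) := by
      rw [occursAt_iff, hs'len]
      refine ⟨by omega, fun j hj => ?_⟩
      rw [hs'j j hj, show (N - n) + j = p + (b - n + j) by omega, hper (b-n+j) (by omega)]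
    have e1 := huniq _ h1
    have e2 := huniq _ h2
    omega
  have hKle : Kp W ≤ b + 1 := Nat.sInf_le hmem
  have hKmem : Kp W ∈ A := Nat.sInf_mem ⟨b+1, hmem⟩
  have := hsmall _ hKmem
  omega

/-! ### Right-extendability of short factors of a closed word -/

lemma ext_lemma (W v : Word) (hvp : v <+: W) (hvlt : v.length < W.length)
    (hvs : v <:+ W) (hb1 : 1 ≤ v.length) :
    ∀ u ∈ F W (v.length - 1), ∃ c, u ++ [c] ∈ F W ((v.length - 1) + 1) := by
  set b := v.length with hb
  set p := W.length - b with hp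
  set N := W.length with hN
  have hper : ∀ j < b, W[p + j]? = W[j]? := per_of_border hvp hvs rfl hvlt
  intro u hu
  obtain ⟨hulen, huinf⟩ := mem_F.mp hu
  obtain ⟨i, hi⟩ := infix_iff_occursAt.mp huinf
  rw [occursAt_iff, hulen] at hi
  obtain ⟨hi1, hi2⟩ := hi
  have key : ∃ i', i' + (b-1) < N ∧ ∀ j < b - 1, W[i'+j]? = u[j]? := by
    by_cases hroom : i + (b-1) < N
    · exact ⟨i, hroom, hi2⟩
    · have hieq : i = N - (b-1) := by omega
      refine ⟨1, by omega, fun j hj => ?_⟩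
      rw [← hi2 j hj, hieq, show N - (b-1) + j = p + (1+j) by omega, hper (1+j) (by omega)]
  obtain ⟨i', hroom, hpt⟩ := key
  obtain ⟨c, hc⟩ : ∃ c, W[i' + (b-1)]? = some c :=
    ⟨W[i'+(b-1)]'hroom, List.getElem?_eq_getElem hroom⟩
  refine ⟨c, mem_F.mpr ⟨by simp [hulen], ?_⟩⟩
  refine infix_iff_occursAt.mpr ⟨i', occursAt_iff.mpr ⟨?_, ?_⟩⟩
  · simp only [List.length_append, hulen, List.length_singleton]
    omega
  · intro j hj
    simp only [List.length_append, hulen, List.length_singleton] at hj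
    by_cases hjb : j < b - 1
    · rw [List.getElem?_append_left (by omega : j < u.length)]
      exact hpt j hjb
    · have hjeq : j = b - 1 := by omega
      subst hjeq
      have hr : (u ++ [c])[b-1]? = some c := by
        rw [List.getElem?_append_right (le_of_eq hulen)]
        simp [hulen]
      rw [hr, hc]

/-! ### Factors of `wx` of length `|v|` are factors of `w` -/

lemma FW_subset (w : Word) (x : AB) (v : Word) (hvp : v <+: w ++ [x])
    (hvs : v <:+ w ++ [x]) (hvlt : v.length < (w ++ [x]).length) :
    F (w ++ [x]) v.length ⊆ F w v.length := by
  intro u hu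
  obtain ⟨hulen, huinf⟩ := mem_F.mp hu
  obtain ⟨i, hi⟩ := infix_iff_occursAt.mp huinf
  have hNw : (w ++ [x]).length = w.length + 1 := by simp
  by_cases hle : i + u.length ≤ w.length
  · exact mem_F.mpr ⟨hulen, infix_iff_occursAt.mpr ⟨i, occursAt_of_append hi hle⟩⟩
  · have hi1 := hi.1
    rw [hulen] at hi1
    have hieq : i = (w ++ [x]).length - v.length := by rw [hulen] at hle; omega
    have hdrop : (w ++ [x]).drop i = v := by
      rw [List.suffix_iff_eq_drop] at hvs
      rw [hieq]
      exact hvs.symm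
    have huv : u = v := by
      rw [← hi.2, hdrop, hulen, List.take_of_length_le (le_refl _)]
    have hvw : v <+: w := by
      have h1 : v = (w ++ [x]).take v.length := List.prefix_iff_eq_take.mp hvp
      rw [List.take_append_of_le_length (by omega : v.length ≤ w.length)] at h1
      exact List.prefix_iff_eq_take.mpr h1
    rw [huv]
    exact mem_F.mpr ⟨rfl, hvw.isInfix⟩

end Stmt10Aux

open Stmt10Aux in
/-- if `wx` is a closed trapezoidal word while `w` is open, then `H w ≤ L w`. -/
theorem H_le_L_at_end_of_open_run (w : Word) (x : AB)
    (htrap : IsTrapezoidal (w ++ [x])) (hclosed : IsClosedWord (w ++ [x]))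
    (hopen : IsOpenWord w) :
    Hp w ≤ Lp w := by
  obtain ⟨hwne, hwopen⟩ := hopen
  obtain ⟨hWne, v, hvp, hvlt, hvs, hocc⟩ := hclosed
  have hNw : (w ++ [x]).length = w.length + 1 := by simp
  have hw1 : 1 ≤ w.length := List.length_pos_iff.mpr hwne
  have hb1 : 1 ≤ v.length := by
    by_contra h
    have hv0 : v = [] := List.length_eq_zero_iff.mp (by omega)
    subst hv0
    have hocc1 : OccursAt ([] : Word) (w ++ [x]) 1 := by
      constructor
      · simp only [List.length_nil, List.length_append, List.length_singleton]
        omega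
      · simp
    rcases hocc 1 hocc1 with h' | h'
    · exact absurd h' one_ne_zero
    · simp only [List.length_nil, List.length_append, List.length_singleton] at h'
      omega
  by_cases hcase : (w ++ [x]).length ≤ 2 * v.length
  · exact absurd (closed_case w x v hwne hvp hvlt hvs hocc hb1 hcase) hwopen
  · push_neg at hcase
    set b := v.length with hbdef
    have hKp : Kp (w ++ [x]) = b + 1 := Kp_closed _ v hvp hvlt hvs hocc hb1
    have htr : (w ++ [x]).length = Kp (w ++ [x]) + Rp (w ++ [x]) := htrap
    have hRp : Rp (w ++ [x]) = (w ++ [x]).length - (b+1) := by omega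
    have hRS : ∃ u₀ : Word, u₀.length = b - 1 ∧ IsRightSpecial u₀ (w ++ [x]) := by
      by_contra h
      push_neg at h
      have hmem : (b-1) ∈ {n | ∀ u : Word, u.length = n → ¬ IsRightSpecial u (w ++ [x])} :=
        fun u hu => h u hu
      have hle : Rp (w ++ [x]) ≤ b - 1 := Nat.sInf_le hmem
      omega
    obtain ⟨u₀, hu₀len, hu₀⟩ := hRS
    have hLS : ∃ u : Word, u.length = b - 1 ∧ IsLeftSpecial u w := by
      by_contra h
      push_neg at h
      have h1 : (F (w ++ [x]) (b-1)).card + 1 ≤ (F (w ++ [x]) ((b-1)+1)).card :=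
        card_lt_RS hu₀len hu₀ (ext_lemma (w ++ [x]) v hvp hvlt hvs hb1)
      have hb' : (b-1)+1 = b := by omega
      rw [hb'] at h1
      have h2 : (F w (b-1)).card ≤ (F (w ++ [x]) (b-1)).card :=
        Finset.card_le_card (F_subset_of_infix (List.prefix_append w [x]).isInfix _)
      have h3 : (F w ((b-1)+1)).card ≤ (F w (b-1)).card := card_le_noLS h
      rw [hb'] at h3
      have h4 : (F (w ++ [x]) b).card ≤ (F w b).card :=
        Finset.card_le_card (FW_subset w x v hvp hvs hvlt)
      omega
    obtain ⟨u₁, hu₁len, hu₁⟩ := hLS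
    have hLSn : ∀ n, n ≤ b - 1 → ∃ u : Word, u.length = n ∧ IsLeftSpecial u w := by
      intro n hn
      refine ⟨u₁.take n, by rw [List.length_take]; omega, ?_, ?_⟩
      · have hpre : ([AB.a] ++ u₁.take n) <+: ([AB.a] ++ u₁) :=
          ⟨u₁.drop n, by rw [List.append_assoc, List.take_append_drop]⟩
        exact hpre.isInfix.trans hu₁.1
      · have hpre : ([AB.b] ++ u₁.take n) <+: ([AB.b] ++ u₁) :=
          ⟨u₁.drop n, by rw [List.append_assoc, List.take_append_drop]⟩
        exact hpre.isInfix.trans hu₁.2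
    have hLnonempty : {n | ∀ u : Word, u.length = n → ¬ IsLeftSpecial u w}.Nonempty := by
      refine ⟨w.length + 1, fun u hu hLSu => ?_⟩
      have := hLSu.1.length_le
      simp [hu] at this
    have hLmem : ∀ u : Word, u.length = Lp w → ¬ IsLeftSpecial u w :=
      Nat.sInf_mem hLnonempty
    have hLp : b ≤ Lp w := by
      by_contra hlt
      push_neg at hlt
      obtain ⟨u, hulen', hu'⟩ := hLSn (Lp w) (by omega)
      exact hLmem u hulen' hu'
    have hvw : v <+: w := by
      have h1 : v = (w ++ [x]).take v.length := List.prefix_iff_eq_take.mp hvp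
      rw [List.take_append_of_le_length (by omega : v.length ≤ w.length)] at h1
      exact List.prefix_iff_eq_take.mpr h1
    have hHp : Hp w ≤ b := by
      apply Nat.sInf_le
      refine ⟨v, hvw, rfl, 0, ?_, ?_⟩
      · show OccursAt v w 0
        rw [occursAt_iff]
        refine ⟨by omega, fun j hj => ?_⟩
        simp only [Nat.zero_add]
        exact (prefix_getElem? hvw hj).symm
      · intro i hi
        have hi : OccursAt v w i := hi
        have h2 := occursAt_append (x := x) hi
        rcases hocc i h2 with h | h
        · exact h
        · have := hi.1
          omega
    omega
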